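/- On any Banach space X, the co-convex topology (the weakest topology containing all complements of norm-closed convex subsets of X) coincides with the weak topology σ(X,X*). In particular, the co-convex topology on a Banach space is Hausdorff. -/

import Mathlib

open Filter Topology Metric Set MeasureTheory
open scoped ENNReal

section Defs

variable (X : Type) [MetricSpace X]

/-- `m` is a midpoint of `x` and `y`. -/
def IsMidpoint {X : Type} [MetricSpace X] (x y m : X) : Prop :=
  dist x m = dist x y / 2 ∧ dist y m = dist x y / 2

/-- `(X,d)` admits midpoints. -/
def AdmitsMidpoints : Prop := ∀ x y : X, ∃ m, IsMidpoint x y m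

/-- The `p`-mean of two nonnegative reals, `p ∈ [1,∞]`. -/
noncomputable def pMean (p : ℝ≥0∞) (a b : ℝ) : ℝ :=
  if p = ∞ then max a b else ((a ^ p.toReal + b ^ p.toReal) / 2) ^ (1 / p.toReal)

/-- `p`-convexity. -/
def PConvex (p : ℝ≥0∞) : Prop :=
  AdmitsMidpoints X ∧ ∀ x y z m : X, IsMidpoint x y m →
    dist m z ≤ pMean p (dist x z) (dist y z)

/-- strict `p`-convexity. -/
def StrictlyPConvex (p : ℝ≥0∞) : Prop :=
  AdmitsMidpoints X ∧ ∀ x y z m : X, IsMidpoint x y m →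
    (if p = 1 then |dist x z - dist y z| < dist x y else x ≠ y) →
    dist m z < pMean p (dist x z) (dist y z)

/-- uniform `p`-convexity. -/
def UniformlyPConvex (p : ℝ≥0∞) : Prop :=
  AdmitsMidpoints X ∧ ∀ ε : ℝ, 0 < ε → ∃ ρ : ℝ, ρ ∈ Set.Ioo (0:ℝ) 1 ∧
    ∀ x y z m : X, IsMidpoint x y m →
      (if p = 1 then |dist x z - dist y z| + ε * pMean 1 (dist x z) (dist y z) < dist x y
        else ε * pMean p (dist x z) (dist y z) < dist x y) →
      dist m z ≤ (1 - ρ) * pMean p (dist x z) (dist y z)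

/-- Busemann non-positive curvature condition. -/
def Busemann : Prop :=
  AdmitsMidpoints X ∧ ∀ x₀ x₁ y₀ y₁ xm ym : X,
    IsMidpoint x₀ x₁ xm → IsMidpoint y₀ y₁ ym →
      dist xm ym ≤ (dist x₀ y₀ + dist x₁ y₁) / 2

/-- `γ` (restricted to `[0,1]`) is a geodesic from `x` to `y`. -/
def IsGeodesic {X : Type} [MetricSpace X] (γ : ℝ → X) (x y : X) : Prop :=
  γ 0 = x ∧ γ 1 = y ∧ ∀ s ∈ Set.Icc (0:ℝ) 1, ∀ t ∈ Set.Icc (0:ℝ) 1,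
    dist (γ s) (γ t) = |s - t| * dist x y

/-- A subset is (geodesically) convex if it contains all geodesics between its points. -/
def GConvex {X : Type} [MetricSpace X] (C : Set X) : Prop :=
  ∀ x ∈ C, ∀ y ∈ C, ∀ γ : ℝ → X, IsGeodesic γ x y → ∀ t ∈ Set.Icc (0:ℝ) 1, γ t ∈ C

/-- The convex hull: the smallest convex set containing `A`. -/
def gConvexHull {X : Type} [MetricSpace X] (A : Set X) : Set X :=
  ⋂₀ {C : Set X | GConvex C ∧ A ⊆ C}

/-- `∞`-convexity. -/
def InftyConvex : Prop :=
  AdmitsMidpoints X ∧ ∀ x y z m : X, IsMidpoint x y m →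
    dist m z ≤ max (dist x z) (dist y z)

/-- strict `∞`-convexity. -/
def StrictlyInftyConvex : Prop :=
  AdmitsMidpoints X ∧ ∀ x y z m : X, IsMidpoint x y m → x ≠ y →
    dist m z < max (dist x z) (dist y z)

/-- uniform `∞`-convexity. -/
def UniformlyInftyConvex : Prop :=
  AdmitsMidpoints X ∧ ∀ ε : ℝ, 0 < ε → ∃ ρ : ℝ, ρ ∈ Set.Ioo (0:ℝ) 1 ∧
    ∀ x y z m : X, IsMidpoint x y m →
      ε * max (dist x z) (dist y z) < dist x y →
      dist m z ≤ (1 - ρ) * max (dist x z) (dist y z)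

/-- `ρ` works as a modulus of nearly uniform convexity for the parameters `ε`, `R`:
for every infinite `ε`-separated family in a ball of radius `r ≤ R` around `y`, the ball
`B_{(1-ρ)r}(y)` intersects the closed convex hull of the family. -/
def NUCModulus (ε R ρ : ℝ) : Prop :=
  ∀ (ι : Type) [Infinite ι], ∀ (x : ι → X) (y : X) (r : ℝ), r ≤ R →
    (∀ i j : ι, i ≠ j → ε ≤ dist (x i) (x j)) → (∀ i, dist (x i) y ≤ r) →
    (Metric.closedBall y ((1 - ρ) * r) ∩ closure (gConvexHull (Set.range x))).Nonempty

/-- Nearly uniform convexity. -/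
def NearlyUniformlyConvex : Prop :=
  InftyConvex X ∧ ∀ R : ℝ, 0 < R → ∀ ε : ℝ, 0 < ε → ∃ ρ : ℝ, 0 < ρ ∧ NUCModulus X ε R ρ

/-- Reflexivity: every decreasing directed family of nonempty bounded closed convex sets
has nonempty intersection. -/
def MetricReflexive : Prop :=
  ∀ (I : Type) [Nonempty I] [Preorder I] [IsDirected I (· ≤ ·)], ∀ C : I → Set X,
    (∀ i, (C i).Nonempty) → (∀ i, Bornology.IsBounded (C i)) → (∀ i, IsClosed (C i)) →
    (∀ i, GConvex (C i)) → (∀ i j : I, j ≤ i → C i ⊆ C j) → (⋂ i, C i).Nonempty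

/-- The co-convex topology: the weakest topology containing all complements of closed
convex sets. -/
def coConvexTopology : TopologicalSpace X :=
  TopologicalSpace.generateFrom {U : Set X | ∃ C : Set X, IsClosed C ∧ GConvex C ∧ U = Cᶜ}

/-- The set of limit points of the sequence `x` in the co-convex topology. -/
def coLim {X : Type} [MetricSpace X] (x : ℕ → X) : Set X :=
  {a : X | Filter.Tendsto x Filter.atTop (@nhds X (coConvexTopology X) a)}

/-- Countable reflexivity. -/
def CountableReflexive : Prop :=
  MetricReflexive X ∧ ∀ x : ℕ → X, (coLim x).Nonempty →
    ∃ φ : ℕ → ℕ, StrictMono φ ∧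
      coLim x = ⋂ m : ℕ, closure (gConvexHull ((fun n => x (φ n)) '' Set.Ici m))

/-- Quasi-convexity: all sublevel sets are convex. -/
def GQuasiConvex {X : Type} [MetricSpace X] (f : X → ℝ) : Prop :=
  ∀ c : ℝ, GConvex {x : X | f x ≤ c}

/-- Quasi-monotonicity: both quasi-convex and quasi-concave. -/
def GQuasiMonotone {X : Type} [MetricSpace X] (f : X → ℝ) : Prop :=
  GQuasiConvex f ∧ GQuasiConvex (fun x => -f x)

/-- The `p`-mean for real `p ∈ [1,∞)`. -/
noncomputable def pMeanR (p a b : ℝ) : ℝ := ((a ^ p + b ^ p) / 2) ^ (1 / p)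

/-- `p`-convexity for real `p`. -/
def PConvexR (p : ℝ) : Prop :=
  AdmitsMidpoints X ∧ ∀ x y z m : X, IsMidpoint x y m →
    dist m z ≤ pMeanR p (dist x z) (dist y z)

/-- strict `p`-convexity for real `p`. -/
def StrictlyPConvexR (p : ℝ) : Prop :=
  AdmitsMidpoints X ∧ ∀ x y z m : X, IsMidpoint x y m →
    (if p = 1 then |dist x z - dist y z| < dist x y else x ≠ y) →
    dist m z < pMeanR p (dist x z) (dist y z)

/-- uniform `p`-convexity for real `p`. -/
def UniformlyPConvexR (p : ℝ) : Prop :=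
  AdmitsMidpoints X ∧ ∀ ε : ℝ, 0 < ε → ∃ ρ : ℝ, ρ ∈ Set.Ioo (0:ℝ) 1 ∧
    ∀ x y z m : X, IsMidpoint x y m →
      ε * pMeanR p (dist x z) (dist y z) < dist x y →
      dist m z ≤ (1 - ρ) * pMeanR p (dist x z) (dist y z)

/-- `ω(z,(x_n)) = limsup_n d(z,x_n)`. -/
noncomputable def asymRadius {X : Type} [MetricSpace X] (x : ℕ → X) (z : X) : ℝ :=
  Filter.limsup (fun n => dist z (x n)) Filter.atTop

/-- `a` is the (unique) asymptotic center of the sequence `x`. -/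
def IsAsymptoticCenter {X : Type} [MetricSpace X] (x : ℕ → X) (a : X) : Prop :=
  (∀ z : X, asymRadius x a ≤ asymRadius x z) ∧
  ∀ b : X, (∀ z : X, asymRadius x b ≤ asymRadius x z) → b = a

/-- Weak sequential convergence: `a` is the asymptotic center of every subsequence. -/
def WeakSeqConv {X : Type} [MetricSpace X] (x : ℕ → X) (a : X) : Prop :=
  ∀ φ : ℕ → ℕ, StrictMono φ → IsAsymptoticCenter (fun n => x (φ n)) a

end Defs
section Aux


open Filter Topology Metric Set

variable {X : Type} [NormedAddCommGroup X] [NormedSpace ℝ X]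

lemma halfspace_open (f : X →L[ℝ] ℝ) {s : Set ℝ} (hs : IsOpen s) :
    IsOpen[⨅ ℓ : X →L[ℝ] ℝ, TopologicalSpace.induced ℓ inferInstance] (f ⁻¹' s) := by
  have h1 : (⨅ ℓ : X →L[ℝ] ℝ, TopologicalSpace.induced ℓ inferInstance) ≤
      TopologicalSpace.induced f inferInstance := iInf_le _ f
  exact h1 _ ⟨s, hs, rfl⟩

lemma weakClosed {C : Set X} (hC : IsClosed C) (hconv : Convex ℝ C) :
    IsClosed[⨅ ℓ : X →L[ℝ] ℝ, TopologicalSpace.induced ℓ inferInstance] C := by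
  rw [← @isOpen_compl_iff X C (⨅ ℓ : X →L[ℝ] ℝ, TopologicalSpace.induced ℓ inferInstance),
    @isOpen_iff_forall_mem_open X (⨅ ℓ : X →L[ℝ] ℝ, TopologicalSpace.induced ℓ inferInstance) Cᶜ]
  intro x hx
  obtain ⟨f, u, hfu, hux⟩ := geometric_hahn_banach_closed_point hconv hC hx
  exact ⟨f ⁻¹' Set.Ioi u, fun y hy hyC => (hfu y hyC).not_gt hy,
    halfspace_open f isOpen_Ioi, hux⟩

theorem coConvex_eq_weak' :
    (TopologicalSpace.generateFrom
        {U : Set X | ∃ C : Set X, IsClosed C ∧ Convex ℝ C ∧ U = Cᶜ}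
      = ⨅ ℓ : X →L[ℝ] ℝ, TopologicalSpace.induced ℓ inferInstance) := by
  apply le_antisymm
  · refine le_iInf fun f => ?_
    rw [show (inferInstance : TopologicalSpace ℝ) = TopologicalSpace.generateFrom
        {s : Set ℝ | ∃ a, s = Set.Ioi a ∨ s = Set.Iio a} from ?_]
    · rw [induced_generateFrom_eq]
      apply le_generateFrom
      rintro - ⟨s, ⟨a, rfl | rfl⟩, rfl⟩
      · exact TopologicalSpace.GenerateOpen.basic _
          ⟨{x | f x ≤ a}, isClosed_le (by continuity) continuous_const,
            fun x hx y hy c d hc hd hcd => by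
              simp only [Set.mem_setOf_eq, map_add, _root_.map_smul, smul_eq_mul] at *
              calc c * f x + d * f y ≤ c * a + d * a := by
                    gcongr
                _ = a := by rw [← add_mul, hcd, one_mul],
            by ext x; simp [not_le]⟩
      · exact TopologicalSpace.GenerateOpen.basic _
          ⟨{x | a ≤ f x}, isClosed_le continuous_const (by continuity),
            fun x hx y hy c d hc hd hcd => by
              simp only [Set.mem_setOf_eq, map_add, _root_.map_smul, smul_eq_mul] at *
              calc (a:ℝ) = c * a + d * a := by rw [← add_mul, hcd, one_mul]
                _ ≤ c * f x + d * f y := by gcongr,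
            by ext x; simp [not_le]⟩
    · exact OrderTopology.topology_eq_generate_intervals (α := ℝ)
  · apply le_generateFrom
    rintro - ⟨C, hC, hconv, rfl⟩
    exact (weakClosed hC hconv).isOpen_compl

lemma weak_t2 [CompleteSpace X] :
    @T2Space X (⨅ ℓ : X →L[ℝ] ℝ, TopologicalSpace.induced ℓ inferInstance) := by
  refine @T2Space.mk X (⨅ ℓ : X →L[ℝ] ℝ, TopologicalSpace.induced ℓ inferInstance)
    fun x y hxy => ?_
  obtain ⟨f, -, hf⟩ := exists_dual_vector ℝ (x - y) (norm_ne_zero_iff.2 (sub_ne_zero.2 hxy))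
  have hne : f x ≠ f y := by
    intro h
    rw [map_sub, h, sub_self] at hf
    exact (norm_ne_zero_iff.2 (sub_ne_zero.2 hxy)) (by exact_mod_cast hf.symm)
  obtain ⟨u, v, hu, hv, hx, hy, huv⟩ := t2_separation hne
  exact ⟨f ⁻¹' u, f ⁻¹' v, halfspace_open f hu, halfspace_open f hv, hx, hy, huv.preimage f⟩

end Aux

/-- On a Banach space the co-convex topology equals the weak topology; in
particular it is Hausdorff. -/
theorem banach_coConvex_eq_weak (X : Type) [NormedAddCommGroup X] [NormedSpace ℝ X]
    [CompleteSpace X] :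
    (TopologicalSpace.generateFrom
        {U : Set X | ∃ C : Set X, IsClosed C ∧ Convex ℝ C ∧ U = Cᶜ}
      = ⨅ ℓ : X →L[ℝ] ℝ, TopologicalSpace.induced ℓ inferInstance) ∧
    @T2Space X (TopologicalSpace.generateFrom
        {U : Set X | ∃ C : Set X, IsClosed C ∧ Convex ℝ C ∧ U = Cᶜ}) := by
  refine ⟨coConvex_eq_weak', ?_⟩
  rw [coConvex_eq_weak']
  exact weak_t2
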